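/- Let G' , α, β be the graph and colorings constructed from a graph G on n vertices and an integer t ≥ 1, and let k = n + t + 1. If G has an independent set of size at least t − 1, then there exists a k-recoloring sequence for G' from α to β of length at most 2t + 2t². -/

import Mathlib

/-- A `k`-coloring of `G`: colors in `{1,…,k}`, adjacent vertices differently colored. -/
def IsKColoring {V : Type*} (G : SimpleGraph V) (k : ℕ) (γ : V → ℕ) : Prop :=
  (∀ v, γ v ∈ Finset.Icc 1 k) ∧ ∀ u v, G.Adj u v → γ u ≠ γ v

/-- A `k`-recoloring sequence `seq 0, …, seq ℓ` from `α` to `β`: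
all are `k`-colorings, and consecutive colorings differ on at most one vertex. -/
def IsRecolSeq {V : Type*} (G : SimpleGraph V) (k : ℕ) (seq : ℕ → V → ℕ)
    (ℓ : ℕ) (α β : V → ℕ) : Prop :=
  seq 0 = α ∧ seq ℓ = β ∧ (∀ i ≤ ℓ, IsKColoring G k (seq i)) ∧
  ∀ i < ℓ, ∀ u w, seq i u ≠ seq (i+1) u → seq i w ≠ seq (i+1) w → u = w

/-- The graph `B_k`: vertices `b^i_j` for `i,j ∈ {1,…,k}`, with `b^i_j ~ b^{i'}_{j'}`
iff `i ≠ i'` and `j ≠ j'` (the complement of `K_k □ K_k`). -/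
def Bgraph (k : ℕ) : SimpleGraph (Fin k × Fin k) where
  Adj p q := p.1 ≠ q.1 ∧ p.2 ≠ q.2
  symm := ⟨fun p q h => ⟨h.1.symm, h.2.symm⟩⟩
  loopless := ⟨fun p h => h.1 rfl⟩

/-- The coloring `α^k` of `B_k`: `α^k(b^i_j) = i`. -/
def alphak (k : ℕ) : Fin k × Fin k → ℕ := fun p => p.1.val + 1

/-- The coloring `β^k` of `B_k`: `β^k(b^i_j) = j`. -/
def betak (k : ℕ) : Fin k × Fin k → ℕ := fun p => p.2.val + 1

/-- Vertices of the graph `G'` of the W[1]-hardness construction: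
`g i` are the vertices `g_1,…,g_n` (copies of `v_1,…,v_n`), `b i j` are the vertices of
`V_B = {b^i_j : i,j ∈ {1,…,t}}`, and `c m s` is the `s`-th vertex of the color-guard set
`C_{m+1}` (each of the `n+t+1` sets `C_1,…,C_{n+t+1}` has `2t + 2t²` vertices). -/
inductive GV (n t : ℕ) : Type
  | g : Fin n → GV n t
  | b : Fin t → Fin t → GV n t
  | c : Fin (n + t + 1) → Fin (2 * t + 2 * t ^ 2) → GV n t
deriving DecidableEq

/-- The graph `G'` of the W[1]-hardness construction, built from `G`. -/
def Wgraph (n t : ℕ) (G : SimpleGraph (Fin n)) : SimpleGraph (GV n t) where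
  Adj w w' :=
    match w, w' with
    | .g p, .g q => G.Adj p q
    | .g _, .b _ _ => True
    | .b _ _, .g _ => True
    | .b i j, .b i' j' => i ≠ i' ∧ j ≠ j'
    | .g i, .c m _ => m.val ≠ i.val ∧ m.val ≠ n + t
    | .c m _, .g i => m.val ≠ i.val ∧ m.val ≠ n + t
    | .b _ _, .c m _ => m.val = n + t
    | .c m _, .b _ _ => m.val = n + t
    | .c _ _, .c _ _ => False
  symm := by
    constructor
    rintro (p | ⟨i, j⟩ | ⟨m, s⟩) (q | ⟨i', j'⟩ | ⟨m', s'⟩) h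
    · exact G.adj_symm h
    · trivial
    · exact h
    · trivial
    · exact ⟨fun e => h.1 e.symm, fun e => h.2 e.symm⟩
    · exact h
    · exact h
    · exact h
    · exact h
  loopless := by
    constructor
    rintro (p | ⟨i, j⟩ | ⟨m, s⟩) h
    · exact G.loopless.irrefl p h
    · exact h.1 rfl
    · exact h

/-- The `(n+t+1)`-coloring `α` of `G'`: `α(g_i) = i`, `α(c) = i` for `c ∈ C_i`,
`α(b^i_j) = n + i`. -/
def Walpha (n t : ℕ) : GV n t → ℕ
  | .g i => i.val + 1
  | .b i _ => n + i.val + 1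
  | .c m _ => m.val + 1

/-- The `(n+t+1)`-coloring `β` of `G'`: agrees with `α` on `V_G ∪ V_C`, and
`β(b^i_j) = n + j`. -/
def Wbeta (n t : ℕ) : GV n t → ℕ
  | .g i => i.val + 1
  | .b _ j => n + j.val + 1
  | .c m _ => m.val + 1

lemma wseq_colbound {j s : ℕ} (hj : j < s) : j*(s+1) + (s+1) ≤ s*(s+1) := by
  calc j*(s+1)+(s+1) = (j+1)*(s+1) := by ring
  _ ≤ s*(s+1) := Nat.mul_le_mul_right _ hj

lemma wseq_uniq {s j i j' i' : ℕ} (hi : i < s+1) (hi' : i' < s+1)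
    (h : j*(s+1) + i = j'*(s+1) + i') : j = j' ∧ i = i' := by
  have e1 : ((s+1)*j + i)/(s+1) = j := by
    rw [Nat.mul_add_div (Nat.succ_pos s), Nat.div_eq_of_lt hi, add_zero]
  have e2 : ((s+1)*j' + i')/(s+1) = j' := by
    rw [Nat.mul_add_div (Nat.succ_pos s), Nat.div_eq_of_lt hi', add_zero]
  have hjj : j = j' := by
    rw [← e1, ← e2, mul_comm (s+1) j, mul_comm (s+1) j', h]
  subst hjj
  exact ⟨rfl, by omega⟩

/-- The recoloring schedule. Phases: 1) recolor `g (e j)` to color `k` at time `j+1`;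
2) columns `j < s` of `B` get spare color `(e j)+1`; 3) column `s` gets color `n+s+1`;
4) columns `j < s` get color `n+j+1`; 5) `g (e j)` back at time `T4+j+1`. -/
def wseq (n s : ℕ) (e : Fin s → Fin n) (m : ℕ) : GV n (s+1) → ℕ
  | .g i => if ∃ j : Fin s, e j = i ∧ j.val + 1 ≤ m ∧ m ≤ s + 2*(s*(s+1)) + (s+1) + j.val
            then n + s + 2 else i.val + 1
  | .b i j =>
      if hj : j.val < s then
        if m < s + j.val*(s+1) + i.val + 1 then n + i.val + 1
        else if m < s + s*(s+1) + (s+1) + j.val*(s+1) + i.val + 1 then (e ⟨j.val, hj⟩).val + 1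
        else n + j.val + 1
      else if m < s + s*(s+1) + i.val + 1 then n + i.val + 1 else n + j.val + 1
  | .c m' _ => m'.val + 1

section Proper
variable {n s : ℕ} {G : SimpleGraph (Fin n)} (e : Fin s → Fin n)

lemma wseq_gb (m : ℕ) (p : Fin n) (i j : Fin (s+1)) :
    wseq n s e m (.g p) ≠ wseq n s e m (.b i j) := by
  have hi := i.isLt
  have hp := p.isLt
  simp only [wseq]
  by_cases hj : j.val < s
  · rw [dif_pos hj]
    have hcb := wseq_colbound hj
    have hsp := (e ⟨j.val, hj⟩).isLt
    split_ifs with h1 h2 h3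
    · omega
    · -- g has color k, b spare
      omega
    · omega
    · omega
    · -- g has own color, b spare : show time contradiction
      intro hc
      have hep : e ⟨j.val, hj⟩ = p := Fin.ext (by omega)
      exact h1 ⟨⟨j.val, hj⟩, hep, by omega, by omega⟩
    · omega
  · rw [dif_neg hj]
    split_ifs with h1 h2 h3 <;> omega

lemma wseq_gc (m : ℕ) (p : Fin n) (mc : Fin (n+(s+1)+1)) (sc : Fin (2*(s+1)+2*(s+1)^2))
    (hadj : mc.val ≠ p.val ∧ mc.val ≠ n + (s+1)) :
    wseq n s e m (.g p) ≠ wseq n s e m (.c mc sc) := by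
  have := mc.isLt
  simp only [wseq]
  split_ifs with h1 <;> omega

lemma wseq_bc (m : ℕ) (i j : Fin (s+1)) (mc : Fin (n+(s+1)+1)) (sc : Fin (2*(s+1)+2*(s+1)^2))
    (hadj : mc.val = n + (s+1)) :
    wseq n s e m (.b i j) ≠ wseq n s e m (.c mc sc) := by
  have hi := i.isLt
  have hj' := j.isLt
  simp only [wseq]
  by_cases hj : j.val < s
  · rw [dif_pos hj]
    have hsp := (e ⟨j.val, hj⟩).isLt
    split_ifs with h1 h2 <;> omega
  · rw [dif_neg hj]
    split_ifs with h1 <;> omega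

lemma wseq_proper (hinj : Function.Injective e)
    (hind : ∀ j j', ¬ G.Adj (e j) (e j')) (m : ℕ) :
    IsKColoring (Wgraph n (s+1) G) (n + (s+1) + 1) (wseq n s e m) := by
  constructor
  · rintro (i | ⟨i, j⟩ | ⟨m', s'⟩) <;> simp only [wseq, Finset.mem_Icc]
    · split_ifs with h
      · omega
      · have := i.isLt; omega
    · have hi := i.isLt
      have hjv := j.isLt
      by_cases hj : j.val < s
      · rw [dif_pos hj]
        have hsp := (e ⟨j.val, hj⟩).isLt
        split_ifs with h1 h2 <;> omega
      · rw [dif_neg hj]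
        split_ifs with h1 <;> omega
    · have := m'.isLt; omega
  · rintro (p | ⟨i, j⟩ | ⟨mc, sc⟩) (q | ⟨i', j'⟩ | ⟨mc', sc'⟩) hadj
    · -- g g
      have hadj' : G.Adj p q := hadj
      have hp := p.isLt
      have hq := q.isLt
      simp only [wseq]
      split_ifs with h1 h2
      · obtain ⟨jj, hej, -⟩ := h1
        obtain ⟨jj', hej', -⟩ := h2
        subst hej hej'
        exact absurd hadj' (hind jj jj')
      · omega
      · omega
      · intro hc
        exact G.ne_of_adj hadj' (Fin.ext (by omega))
    · exact wseq_gb e m p i' j'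
    · exact wseq_gc e m p mc' sc' hadj
    · exact (wseq_gb e m q i j).symm
    · -- b b
      have hadj' : i ≠ i' ∧ j ≠ j' := hadj
      have hi := i.isLt
      have hi' := i'.isLt
      have hjv := j.isLt
      have hjv' := j'.isLt
      simp only [wseq]
      by_cases hj : j.val < s <;> by_cases hj2 : j'.val < s
      · rw [dif_pos hj, dif_pos hj2]
        have hcb := wseq_colbound hj
        have hcb' := wseq_colbound hj2
        have hsp := (e ⟨j.val, hj⟩).isLt
        have hsp' := (e ⟨j'.val, hj2⟩).isLt
        split_ifs with h1 h2 h3 h4 h5 h6 h7 h8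
        · intro hc; exact hadj'.1 (Fin.ext (by omega))
        · omega
        · omega
        · omega
        · -- spare spare
          intro hc
          have : e ⟨j.val, hj⟩ = e ⟨j'.val, hj2⟩ := Fin.ext (by omega)
          exact hadj'.2 (Fin.ext (by simpa using congrArg Fin.val (hinj this)))
        · omega
        · omega
        · omega
        · intro hc; exact hadj'.2 (Fin.ext (by omega))
      · rw [dif_pos hj, dif_neg hj2]
        have hcb := wseq_colbound hj
        have hsp := (e ⟨j.val, hj⟩).isLt
        split_ifs with h1 h2 h3 h4 h5
        · intro hc; exact hadj'.1 (Fin.ext (by omega))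
        · omega
        · omega
        · omega
        · omega
        · omega
      · rw [dif_neg hj, dif_pos hj2]
        have hcb := wseq_colbound hj2
        have hsp := (e ⟨j'.val, hj2⟩).isLt
        split_ifs with h1 h2 h3 h4 h5
        · intro hc; exact hadj'.1 (Fin.ext (by omega))
        · omega
        · omega
        · omega
        · omega
        · omega
      · exact absurd (Fin.ext (by omega) : j = j') hadj'.2
    · exact wseq_bc e m i j mc' sc' hadj
    · exact (wseq_gc e m q mc sc ⟨hadj.1, hadj.2⟩).symm
    · exact (wseq_bc e m i' j' mc sc hadj).symm
    · exact absurd hadj (by simp [Wgraph])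

end Proper

section Single
variable {n s : ℕ} (e : Fin s → Fin n)

lemma wseq_change_g {m : ℕ} {i : Fin n}
    (h : wseq n s e m (.g i) ≠ wseq n s e (m+1) (.g i)) :
    ∃ j : Fin s, e j = i ∧
      (m + 1 = j.val + 1 ∨ m + 1 = s + 2*(s*(s+1)) + (s+1) + j.val + 1) := by
  simp only [wseq] at h
  split_ifs at h with h1 h2 h2
  · exact absurd rfl h
  · obtain ⟨j, hej, hj1, hj2⟩ := h1
    have hn : ¬(j.val + 1 ≤ m + 1 ∧ m + 1 ≤ s + 2*(s*(s+1)) + (s+1) + j.val) :=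
      fun hh => h2 ⟨j, hej, hh.1, hh.2⟩
    exact ⟨j, hej, by omega⟩
  · obtain ⟨j, hej, hj1, hj2⟩ := h2
    have hn : ¬(j.val + 1 ≤ m ∧ m ≤ s + 2*(s*(s+1)) + (s+1) + j.val) :=
      fun hh => h1 ⟨j, hej, hh.1, hh.2⟩
    exact ⟨j, hej, by omega⟩
  · exact absurd rfl h

lemma wseq_change_b1 {m : ℕ} {i j : Fin (s+1)} (hj : j.val < s)
    (h : wseq n s e m (.b i j) ≠ wseq n s e (m+1) (.b i j)) :
    m + 1 = s + j.val*(s+1) + i.val + 1 ∨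
      m + 1 = s + s*(s+1) + (s+1) + j.val*(s+1) + i.val + 1 := by
  simp only [wseq, dif_pos hj] at h
  split_ifs at h <;> omega

lemma wseq_change_b2 {m : ℕ} {i j : Fin (s+1)} (hj : ¬ j.val < s)
    (h : wseq n s e m (.b i j) ≠ wseq n s e (m+1) (.b i j)) :
    m + 1 = s + s*(s+1) + i.val + 1 := by
  simp only [wseq, dif_neg hj] at h
  split_ifs at h <;> omega

lemma wseq_single (hinj : Function.Injective e) (m : ℕ) (u w : GV n (s+1))
    (hu : wseq n s e m u ≠ wseq n s e (m+1) u)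
    (hw : wseq n s e m w ≠ wseq n s e (m+1) w) : u = w := by
  obtain (p | ⟨i, j⟩ | ⟨mc, sc⟩) := u
  · obtain ⟨jj, hej, hd⟩ := wseq_change_g e hu
    obtain (q | ⟨i', j'⟩ | ⟨mc', sc'⟩) := w
    · obtain ⟨jj', hej', hd'⟩ := wseq_change_g e hw
      have hvv : jj.val = jj'.val := by
        have := jj.isLt; have := jj'.isLt; omega
      rw [← hej, ← hej', congrArg e (Fin.ext hvv)]
    · have hjlt := jj.isLt
      have hilt := i'.isLt
      by_cases hj2 : j'.val < s
      · have hcb := wseq_colbound hj2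
        have := wseq_change_b1 e hj2 hw
        exfalso; omega
      · have := wseq_change_b2 e hj2 hw
        exfalso; omega
    · simp [wseq] at hw
  · obtain (q | ⟨i', j'⟩ | ⟨mc', sc'⟩) := w
    · obtain ⟨jj', hej', hd'⟩ := wseq_change_g e hw
      have hjlt := jj'.isLt
      have hilt := i.isLt
      by_cases hj1 : j.val < s
      · have hcb := wseq_colbound hj1
        have := wseq_change_b1 e hj1 hu
        exfalso; omega
      · have := wseq_change_b2 e hj1 hu
        exfalso; omega
    · have hi := i.isLt
      have hi' := i'.isLt
      by_cases hj1 : j.val < s <;> by_cases hj2 : j'.val < s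
      · have hd := wseq_change_b1 e hj1 hu
        have hd' := wseq_change_b1 e hj2 hw
        have hcb := wseq_colbound hj1
        have hcb' := wseq_colbound hj2
        rcases hd with h | h <;> rcases hd' with h' | h'
        · obtain ⟨hjj, hii⟩ := wseq_uniq hi hi'
            (by omega : j.val*(s+1) + i.val = j'.val*(s+1) + i'.val)
          rw [Fin.ext hii, Fin.ext hjj]
        · exfalso; omega
        · exfalso; omega
        · obtain ⟨hjj, hii⟩ := wseq_uniq hi hi'
            (by omega : j.val*(s+1) + i.val = j'.val*(s+1) + i'.val)
          rw [Fin.ext hii, Fin.ext hjj]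
      · have hd := wseq_change_b1 e hj1 hu
        have hd' := wseq_change_b2 e hj2 hw
        have hcb := wseq_colbound hj1
        exfalso; omega
      · have hd := wseq_change_b2 e hj1 hu
        have hd' := wseq_change_b1 e hj2 hw
        have hcb := wseq_colbound hj2
        exfalso; omega
      · have hd := wseq_change_b2 e hj1 hu
        have hd' := wseq_change_b2 e hj2 hw
        have hjv := j.isLt
        have hjv' := j'.isLt
        have h1 : i = i' := Fin.ext (by omega)
        have h2 : j = j' := Fin.ext (by omega)
        rw [h1, h2]
    · simp [wseq] at hw
  · simp [wseq] at hu

end Single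

lemma wseq_zero (n s : ℕ) (e : Fin s → Fin n) : wseq n s e 0 = Walpha n (s+1) := by
  funext v
  obtain (p | ⟨i, j⟩ | ⟨mc, sc⟩) := v <;> simp only [wseq, Walpha]
  · rw [if_neg]
    rintro ⟨j, -, hj, -⟩; omega
  · by_cases hj : j.val < s
    · rw [dif_pos hj, if_pos (by omega)]
    · rw [dif_neg hj, if_pos (by omega)]

lemma wseq_last (n s : ℕ) (e : Fin s → Fin n) :
    wseq n s e (s + 2*(s*(s+1)) + (s+1) + s) = Wbeta n (s+1) := by
  funext v
  obtain (p | ⟨i, j⟩ | ⟨mc, sc⟩) := v <;> simp only [wseq, Wbeta]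
  · rw [if_neg]
    rintro ⟨j, -, -, hj⟩
    have := j.isLt; omega
  · have hi := i.isLt
    by_cases hj : j.val < s
    · have hcb := wseq_colbound hj
      rw [dif_pos hj, if_neg (by omega), if_neg (by omega)]
    · rw [dif_neg hj, if_neg (by omega)]


/-- If `G` has an independent set of size at least `t - 1`, then there is an
`(n+t+1)`-recoloring sequence for `G'` from `α` to `β` of length at most `2t + 2t²`. -/
theorem stmt_7 (n t : ℕ) (ht : 1 ≤ t) (G : SimpleGraph (Fin n))
    (S : Finset (Fin n)) (hScard : t - 1 ≤ S.card)
    (hSind : ∀ u ∈ S, ∀ v ∈ S, ¬ G.Adj u v) :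
    ∃ ℓ ≤ 2 * t + 2 * t ^ 2, ∃ seq : ℕ → GV n t → ℕ,
      IsRecolSeq (Wgraph n t G) (n + t + 1) seq ℓ (Walpha n t) (Wbeta n t) := by
  obtain ⟨s, rfl⟩ : ∃ s, t = s + 1 := ⟨t - 1, by omega⟩
  obtain ⟨T, hTS, hTcard⟩ := Finset.exists_subset_card_eq (show s ≤ S.card by omega)
  set e : Fin s → Fin n := fun j => ((T.orderIsoOfFin hTcard j : T) : Fin n) with he
  have hinj : Function.Injective e := fun a b h => by
    have := (T.orderIsoOfFin hTcard).injective (Subtype.ext h)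
    exact this
  have hmem : ∀ j, e j ∈ S := fun j => hTS (T.orderIsoOfFin hTcard j).2
  have hind : ∀ j j', ¬ G.Adj (e j) (e j') := fun j j' => hSind _ (hmem j) _ (hmem j')
  refine ⟨s + 2*(s*(s+1)) + (s+1) + s, by nlinarith, wseq n s e,
    wseq_zero n s e, wseq_last n s e, fun i _ => wseq_proper e hinj hind i,
    fun i _ u w hu hw => wseq_single e hinj i u w hu hw⟩
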